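/- Let α > 0 and L ≥ 0, and let γ > (L/(2α))². Define φ(t) = t·exp(γ t²). Then for all s ∈ ℝ, φ'(s) − (L/α)·|φ(s)| ≥ 1/2. -/

import Mathlib

theorem phi_derivative_lower_bound (α L γ : ℝ) (hα : 0 < α) (hL : 0 ≤ L)
    (hγ : γ > (L / (2 * α)) ^ 2) (φ : ℝ → ℝ)
    (hφ : ∀ t : ℝ, φ t = t * Real.exp (γ * t ^ 2)) :
    ∀ s : ℝ, deriv φ s - (L / α) * |φ s| ≥ 1 / 2 := by
  intro s
  have hγ0 : 0 < γ := lt_of_le_of_lt (sq_nonneg _) hγ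
  have hφfun : φ = fun t => t * Real.exp (γ * t ^ 2) := funext hφ
  have hd : HasDerivAt φ ((1 + 2 * γ * s ^ 2) * Real.exp (γ * s ^ 2)) s := by
    rw [hφfun]
    have h1 : HasDerivAt (fun t : ℝ => γ * t ^ 2) (γ * (2 * s)) s := by
      simpa using ((hasDerivAt_pow 2 s).const_mul γ)
    have h2 : HasDerivAt (fun t : ℝ => Real.exp (γ * t ^ 2))
        (Real.exp (γ * s ^ 2) * (γ * (2 * s))) s := (Real.hasDerivAt_exp _).comp s h1
    have h3 : HasDerivAt (fun t : ℝ => t * Real.exp (γ * t ^ 2))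
        (1 * Real.exp (γ * s ^ 2) + s * (Real.exp (γ * s ^ 2) * (γ * (2 * s)))) s :=
      (hasDerivAt_id' s).mul h2
    convert h3 using 1
    ring
  rw [hd.deriv, hφ s]
  have hexp1 : (1 : ℝ) ≤ Real.exp (γ * s ^ 2) := by
    rw [Real.one_le_exp_iff]
    positivity
  have habs : |s * Real.exp (γ * s ^ 2)| = |s| * Real.exp (γ * s ^ 2) := by
    rw [abs_mul, abs_of_pos (Real.exp_pos _)]
  rw [habs]
  set E := Real.exp (γ * s ^ 2) with hE
  have hkey : 1 + 2 * γ * s ^ 2 - (L / α) * |s| ≥ 1 / 2 := by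
    have hs2 : s ^ 2 = |s| ^ 2 := (sq_abs s).symm
    rw [hs2]
    have h1 : (L / (2 * α)) ^ 2 = (L / α) ^ 2 / 4 := by
      rw [show (2*α) = α*2 by ring, ← div_div]; ring
    rw [h1] at hγ
    nlinarith [sq_nonneg (4 * γ * |s| - L / α), abs_nonneg s, sq_nonneg (L / α)]
  have hEpos : 0 < E := Real.exp_pos _
  have : (1 + 2 * γ * s ^ 2) * E - L / α * (|s| * E)
      = (1 + 2 * γ * s ^ 2 - (L / α) * |s|) * E := by ring
  rw [this]
  calc (1 + 2 * γ * s ^ 2 - (L / α) * |s|) * E ≥ (1 / 2) * E := by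
        apply mul_le_mul_of_nonneg_right hkey hEpos.le
    _ ≥ 1 / 2 := by nlinarith
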